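/- For any n ≥ 100, m = ⌈√n⌉, any i ∈ {1,…,m}, and any real t ≥ 1: under μ_n^m, Pr[n_i ≥ t·√n] ≤ e^{−0.9 t + 0.1}. -/

import Mathlib

open Finset

/-- Pivot list: p₀ = 1, then the sorted pivots, then p_m = n+1. -/
def pivotList (n : ℕ) (P : Finset ℕ) : List ℕ :=
  1 :: (P.sort (· ≤ ·)) ++ [n + 1]

/-- The i-th gap (bucket size) nᵢ = pᵢ − pᵢ₋₁, for i = 1,…,m. -/
def gap (n : ℕ) (P : Finset ℕ) (i : ℕ) : ℕ :=
  (pivotList n P).getD i 0 - (pivotList n P).getD (i - 1) 0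

/-- Sample space of μ_n^m : all (m−1)-element subsets of {2,…,n}. -/
def pivotSets (n m : ℕ) : Finset (Finset ℕ) :=
  (Finset.Icc 2 n).powersetCard (m - 1)

lemma count_bound (n m i s : ℕ) (hm2 : 2 ≤ m) (hi1 : 1 ≤ i) (him : i ≤ m) (hs : 2 ≤ s) :
    ((pivotSets n m).filter (fun P => s ≤ gap n P i)).card ≤ (n - s).choose (m - 1) := by
  classical
  have htarget : ((Icc 2 (n - s + 1)).powersetCard (m - 1)).card = (n - s).choose (m - 1) := by
    rw [card_powersetCard, Nat.card_Icc]
    have h : n - s + 1 + 1 - 2 = n - s := by omega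
    rw [h]
  rw [← htarget]
  set f : Finset ℕ → Finset ℕ := fun P =>
    P.image (fun x => if (1 :: P.sort (· ≤ ·)).getD (i - 1) 0 < x then x - (s - 1) else x) with hf
  set g : Finset ℕ → Finset ℕ := fun Q =>
    Q.image (fun x => if (1 :: Q.sort (· ≤ ·)).getD (i - 1) 0 < x then x + (s - 1) else x) with hg
  have main : ∀ P ∈ (pivotSets n m).filter (fun P => s ≤ gap n P i),
      f P ∈ (Icc 2 (n - s + 1)).powersetCard (m - 1) ∧ g (f P) = P := by
    intro P hPmem
    rw [mem_filter, pivotSets, mem_powersetCard] at hPmem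
    obtain ⟨⟨hPsub, hPcard⟩, hgap⟩ := hPmem
    set l := P.sort (· ≤ ·) with hl
    have hlen : l.length = m - 1 := by rw [hl, Finset.length_sort, hPcard]
    have hsortlt : l.Pairwise (· < ·) := (Finset.sortedLT_sort P).pairwise
    have hmemP : ∀ x ∈ P, 2 ≤ x ∧ x ≤ n := fun x hx => mem_Icc.mp (hPsub hx)
    have hmeml : ∀ x ∈ l, x ∈ P := fun x hx => (Finset.mem_sort _).mp hx
    have hn2 : 2 ≤ n := by
      have hne : P.Nonempty := Finset.card_pos.mp (by omega)
      obtain ⟨x, hx⟩ := hne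
      have := hmemP x hx
      omega
    have hLdef : pivotList n P = (1 :: l) ++ [n + 1] := rfl
    have hLlen : (pivotList n P).length = m + 1 := by
      rw [hLdef]; simp [hlen]; omega
    have hLsort : (pivotList n P).Pairwise (· < ·) := by
      rw [hLdef]
      refine List.pairwise_append.mpr ⟨?_, by simp, ?_⟩
      · rw [List.pairwise_cons]
        refine ⟨fun b hb => ?_, hsortlt⟩
        show 1 < b
        have := hmemP b (hmeml b hb); omega
      · intro a ha b hb
        simp only [List.mem_singleton] at hb
        subst hb
        show a < n + 1
        rcases List.mem_cons.mp ha with h | h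
        · omega
        · have := hmemP a (hmeml a h); omega
    have hmono : ∀ j k : ℕ, j < m + 1 → k < m + 1 → j < k →
        (pivotList n P).getD j 0 < (pivotList n P).getD k 0 := by
      intro j k hj hk hjk
      rw [List.getD_eq_getElem _ _ (by omega), List.getD_eq_getElem _ _ (by omega)]
      exact hLsort.sortedLT.strictMono_get (show (⟨j, by omega⟩ : Fin _) < ⟨k, by omega⟩ from hjk)
    have hmono' : ∀ j k : ℕ, j < m + 1 → k < m + 1 → j ≤ k →
        (pivotList n P).getD j 0 ≤ (pivotList n P).getD k 0 := by
      intro j k hj hk hjk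
      rcases eq_or_lt_of_le hjk with h | h
      · rw [h]
      · exact (hmono j k hj hk h).le
    set A := (pivotList n P).getD i 0 with hA
    set B := (pivotList n P).getD (i - 1) 0 with hB
    have hBA : B < A := hmono (i - 1) i (by omega) (by omega) (by omega)
    have hBSA : B + s ≤ A := by
      have : s ≤ A - B := hgap
      omega
    have h0 : (pivotList n P).getD 0 0 = 1 := rfl
    have hB1 : 1 ≤ B := by
      rcases Nat.eq_zero_or_pos (i - 1) with h | h
      · rw [hB, h, h0]
      · have := hmono 0 (i - 1) (by omega) (by omega) h
        omega
    have h1l : (1 :: l).length = m := by simp [hlen]; omega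
    have hlast : (pivotList n P).getD m 0 = n + 1 := by
      rw [hLdef, List.getD_append_right _ _ _ _ (by rw [h1l]), h1l]
      simp
    have hAn : A ≤ n + 1 := by
      rw [← hlast]
      exact hmono' i m (by omega) (by omega) him
    have hbB : (1 :: P.sort (· ≤ ·)).getD (i - 1) 0 = B := by
      rw [hB, hLdef, show (1 :: l) ++ [n+1] = (1 :: l) ++ [n+1] from rfl,
        List.getD_append _ _ _ _ (by simp [hlen]; omega)]
    -- position dichotomy
    have hpos : ∀ x ∈ P, x ≤ B ∨ A ≤ x := by
      intro x hx
      have hxl : x ∈ l := (Finset.mem_sort _).mpr hx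
      obtain ⟨j, hj, hjx⟩ := List.mem_iff_getElem.mp hxl
      have hxL : (pivotList n P).getD (j + 1) 0 = x := by
        rw [hLdef, List.getD_append _ _ _ _ (by simp; omega), List.getD_cons_succ,
          List.getD_eq_getElem _ _ hj, hjx]
      rw [hlen] at hj
      rcases le_or_gt (j + 1) (i - 1) with h | h
      · left
        rw [← hxL, hB]
        exact hmono' (j + 1) (i - 1) (by omega) (by omega) h
      · right
        rw [← hxL, hA]
        exact hmono' i (j + 1) (by omega) (by omega) (by omega)
    set ψ : ℕ → ℕ := fun x => if (1 :: P.sort (· ≤ ·)).getD (i - 1) 0 < x then x - (s - 1) else x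
      with hψ
    have hdich : ∀ x ∈ P, (x ≤ B ∧ ψ x = x) ∨ (B + s ≤ x ∧ ψ x = x - (s - 1)) := by
      intro x hx
      rcases hpos x hx with h | h
      · left
        refine ⟨h, ?_⟩
        rw [hψ]
        simp only [hbB]
        rw [if_neg (by omega)]
      · right
        refine ⟨by omega, ?_⟩
        rw [hψ]
        simp only [hbB]
        rw [if_pos (by omega)]
    have hmapsort : (l.map ψ).Pairwise (· < ·) := by
      rw [List.pairwise_map]
      refine hsortlt.imp_of_mem ?_
      intro a b ha hb hab
      replace hab : a < b := hab
      show ψ a < ψ b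
      rcases hdich a (hmeml a ha) with ⟨h1, h2⟩ | ⟨h1, h2⟩ <;>
        rcases hdich b (hmeml b hb) with ⟨h3, h4⟩ | ⟨h3, h4⟩ <;>
        rw [h2, h4] <;> omega
    have hmapnd : (l.map ψ).Nodup := hmapsort.imp (fun h => ne_of_lt h)
    have hinjOn : Set.InjOn ψ ↑P := by
      intro x hx y hy hxy
      rcases hdich x hx with ⟨h1, h2⟩ | ⟨h1, h2⟩ <;>
        rcases hdich y hy with ⟨h3, h4⟩ | ⟨h3, h4⟩ <;>
        rw [h2, h4] at hxy <;> omega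
    have hQcard : (P.image ψ).card = m - 1 := by
      rw [Finset.card_image_of_injOn hinjOn, hPcard]
    have hQsub : P.image ψ ⊆ Icc 2 (n - s + 1) := by
      intro y hy
      obtain ⟨x, hx, hxy⟩ := Finset.mem_image.mp hy
      have hx2 := hmemP x hx
      rw [mem_Icc]
      rcases hdich x hx with ⟨h1, h2⟩ | ⟨h1, h2⟩ <;> rw [h2] at hxy <;> omega
    have hfP : f P = P.image ψ := rfl
    have hQsort : (P.image ψ).sort (· ≤ ·) = l.map ψ := by
      refine List.Perm.eq_of_pairwise' (r := (· ≤ ·)) (Finset.pairwise_sort _ _) (hmapsort.imp le_of_lt) ?_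
      refine List.perm_of_nodup_nodup_toFinset_eq (Finset.sort_nodup _ _) hmapnd ?_
      rw [Finset.sort_toFinset]
      ext y
      simp only [List.mem_toFinset, List.mem_map, Finset.mem_image]
      constructor
      · rintro ⟨x, hx, hxy⟩; exact ⟨x, (Finset.mem_sort _).mpr hx, hxy⟩
      · rintro ⟨x, hx, hxy⟩; exact ⟨x, hmeml x hx, hxy⟩
    have hb' : (1 :: (P.image ψ).sort (· ≤ ·)).getD (i - 1) 0 = B := by
      rw [hQsort]
      rcases Nat.eq_zero_or_pos (i - 1) with h | h
      · rw [h]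
        rw [hB, h, h0]
        rfl
      · rw [show i - 1 = (i - 2) + 1 by omega, List.getD_cons_succ]
        have hi2 : i - 2 < l.length := by omega
        rw [List.getD_eq_getElem _ _ (by simp [hi2]), List.getElem_map]
        have hlB : l[i - 2] = B := by
          rw [hB, hLdef, List.getD_append _ _ _ _ (by simp [hlen]; omega),
            show i - 1 = (i - 2) + 1 by omega, List.getD_cons_succ,
            List.getD_eq_getElem _ _ hi2]
        rw [hlB, hψ]
        simp only [hbB]
        rw [if_neg (by omega)]
    constructor
    · rw [hfP, mem_powersetCard]
      exact ⟨hQsub, hQcard⟩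
    · rw [hfP, hg]
      simp only [hb']
      rw [Finset.image_image]
      have : ∀ x ∈ P, ((fun x => if B < x then x + (s - 1) else x) ∘ ψ) x = x := by
        intro x hx
        rcases hdich x hx with ⟨h1, h2⟩ | ⟨h1, h2⟩ <;>
          simp only [Function.comp_apply, h2] <;>
          [rw [if_neg (by omega)]; rw [if_pos (by omega)]] <;> omega
      calc P.image ((fun x => if B < x then x + (s - 1) else x) ∘ ψ) = P.image id :=
            Finset.image_congr this
        _ = P := Finset.image_id
  refine card_le_card_of_injOn f (fun P hP => (main P hP).1) ?_
  intro P1 h1 P2 h2 he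
  rw [← (main P1 h1).2, ← (main P2 h2).2]
  simp only [Finset.mem_coe] at h1 h2
  rw [he]


lemma choose_ratio (N r : ℕ) (hr : 0 < r) (hrN : r ≤ N) :
    ∀ k : ℕ, ((N - k).choose r : ℝ) ≤ (N.choose r : ℝ) * (((N : ℝ) - r) / N) ^ k := by
  have hN0 : (0:ℝ) < N := by
    have : 0 < N := lt_of_lt_of_le hr hrN
    exact_mod_cast this
  have hrle : (r : ℝ) ≤ N := by exact_mod_cast hrN
  have hratio0 : 0 ≤ ((N : ℝ) - r) / N := div_nonneg (by linarith) hN0.le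
  intro k
  induction k with
  | zero => simp
  | succ k ih =>
    by_cases hc : N - (k + 1) < r
    · rw [Nat.choose_eq_zero_of_lt hc]
      push_cast
      positivity
    · push_neg at hc
      have hk1 : r + (k + 1) ≤ N := by omega
      have key : ((N - (k + 1)).choose r : ℝ) * ((N : ℝ) - k) =
          ((N - k).choose r : ℝ) * (((N : ℝ) - k) - r) := by
        have h2 := Nat.choose_mul_succ_eq (N - (k + 1)) r
        rw [show N - (k + 1) + 1 = N - k by omega] at h2
        have h3 : ((N - (k + 1)).choose r : ℝ) * ((N - k : ℕ) : ℝ) =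
            ((N - k).choose r : ℝ) * ((N - k - r : ℕ) : ℝ) := by exact_mod_cast h2
        rw [Nat.cast_sub (by omega : k ≤ N), Nat.cast_sub (by omega : r ≤ N - k),
          Nat.cast_sub (by omega : k ≤ N)] at h3
        push_cast at h3 ⊢
        linarith [h3]
      have hNk1 : (0 : ℝ) < (N : ℝ) - (k + 1) + 1 := by
        have : (k + 1 : ℕ) ≤ N := by omega
        have := (Nat.cast_le (α := ℝ)).mpr this
        push_cast at this
        linarith
      have hNk : (0 : ℝ) < (N : ℝ) - k := by linarith
      have hck0 : (0 : ℝ) ≤ ((N - k).choose r : ℝ) := Nat.cast_nonneg _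
      have step : ((N - (k + 1)).choose r : ℝ) ≤ ((N - k).choose r : ℝ) * (((N : ℝ) - r) / N) := by
        rw [mul_div_assoc', le_div_iff₀ hN0]
        nlinarith [key, hNk, mul_nonneg (mul_nonneg hck0 (Nat.cast_nonneg r)) (Nat.cast_nonneg k)]
      calc ((N - (k + 1)).choose r : ℝ) ≤ ((N - k).choose r : ℝ) * (((N : ℝ) - r) / N) := step
        _ ≤ ((N.choose r : ℝ) * (((N : ℝ) - r) / N) ^ k) * (((N : ℝ) - r) / N) := by
            exact mul_le_mul_of_nonneg_right ih hratio0
        _ = (N.choose r : ℝ) * (((N : ℝ) - r) / N) ^ (k + 1) := by ring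

set_option maxHeartbeats 1000000 in
theorem stmt_2 (n : ℕ) (hn : 100 ≤ n) (m : ℕ) (hm : m = ⌈Real.sqrt n⌉₊)
    (i : ℕ) (hi : i ∈ Finset.Icc 1 m) (t : ℝ) (ht : 1 ≤ t) :
    (((pivotSets n m).filter (fun P => t * Real.sqrt n ≤ (gap n P i : ℝ))).card : ℝ)
        / (pivotSets n m).card
      ≤ Real.exp (-0.9 * t + 0.1) := by
  obtain ⟨hi1, him⟩ := Finset.mem_Icc.mp hi
  have hn0 : (0:ℝ) ≤ (n:ℝ) := by positivity
  have husq : Real.sqrt n ^ 2 = (n:ℝ) := Real.sq_sqrt hn0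
  have hu10 : (10:ℝ) ≤ Real.sqrt n := by
    rw [show (10:ℝ) = Real.sqrt (10^2) by rw [Real.sqrt_sq (by norm_num)]]
    exact Real.sqrt_le_sqrt (by exact_mod_cast hn)
  have hu0 : (0:ℝ) ≤ Real.sqrt n := Real.sqrt_nonneg _
  have hmu : Real.sqrt n ≤ (m:ℝ) := by rw [hm]; exact Nat.le_ceil _
  have hm10 : 10 ≤ m := by exact_mod_cast le_trans hu10 hmu
  have hmn : m ≤ n := by
    rw [hm, Nat.ceil_le]
    have hn1 : (1:ℝ) ≤ (n:ℝ) := by exact_mod_cast (show 1 ≤ n by omega)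
    calc Real.sqrt n ≤ Real.sqrt ((n:ℝ)^2) := Real.sqrt_le_sqrt (by nlinarith)
      _ = (n:ℝ) := Real.sqrt_sq hn0
  set s := ⌈t * Real.sqrt n⌉₊ with hs
  have hsu : t * Real.sqrt n ≤ (s:ℝ) := Nat.le_ceil _
  have hms : m ≤ s := by rw [hm, hs]; exact Nat.ceil_le_ceil (by nlinarith)
  have hfilter_eq : (pivotSets n m).filter (fun P => t * Real.sqrt n ≤ (gap n P i : ℝ))
      = (pivotSets n m).filter (fun P => s ≤ gap n P i) := by
    apply Finset.filter_congr
    intro P _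
    constructor
    · intro h; exact Nat.ceil_le.mpr h
    · intro h
      calc t * Real.sqrt n ≤ (s:ℝ) := Nat.le_ceil _
        _ ≤ (gap n P i : ℝ) := by exact_mod_cast h
  rw [hfilter_eq]
  have hcount := count_bound n m i s (by omega) hi1 him (by omega)
  have htotal : (pivotSets n m).card = (n-1).choose (m-1) := by
    rw [pivotSets, Finset.card_powersetCard, Nat.card_Icc,
      show n + 1 - 2 = n - 1 from by omega]
  have htpos : 0 < (n-1).choose (m-1) := Nat.choose_pos (by omega)
  have htposR : (0:ℝ) < ((n-1).choose (m-1) : ℝ) := by exact_mod_cast htpos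
  rw [htotal]
  have hR := choose_ratio (n-1) (m-1) (by omega) (by omega) (s-1)
  rw [show n - 1 - (s-1) = n - s from by omega] at hR
  have hA0 : (0:ℝ) < ((n-1:ℕ):ℝ) := by
    have : 0 < n - 1 := by omega
    exact_mod_cast this
  have hBA : ((m-1:ℕ):ℝ) ≤ ((n-1:ℕ):ℝ) := by
    have : m - 1 ≤ n - 1 := by omega
    exact_mod_cast this
  have hB0 : (0:ℝ) ≤ ((m-1:ℕ):ℝ) := Nat.cast_nonneg _
  have hrho0 : (0:ℝ) ≤ (((n-1:ℕ):ℝ) - ((m-1:ℕ):ℝ)) / ((n-1:ℕ):ℝ) :=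
    div_nonneg (by linarith) hA0.le
  calc ((((pivotSets n m).filter (fun P => s ≤ gap n P i)).card : ℝ)) / ((n-1).choose (m-1) : ℝ)
      ≤ ((n-s).choose (m-1) : ℝ) / ((n-1).choose (m-1) : ℝ) := by
        gcongr
    _ ≤ ((((n-1:ℕ):ℝ) - ((m-1:ℕ):ℝ)) / ((n-1:ℕ):ℝ)) ^ (s-1) := by
        rw [div_le_iff₀ htposR]
        linarith [hR]
    _ ≤ (Real.exp (-(((m-1:ℕ):ℝ)) / ((n-1:ℕ):ℝ))) ^ (s-1) := by
        apply pow_le_pow_left₀ hrho0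
        have h1 := Real.add_one_le_exp (-(((m-1:ℕ):ℝ)) / ((n-1:ℕ):ℝ))
        have heq : (((n-1:ℕ):ℝ) - ((m-1:ℕ):ℝ)) / ((n-1:ℕ):ℝ)
            = -(((m-1:ℕ):ℝ)) / ((n-1:ℕ):ℝ) + 1 := by
          rw [sub_div, div_self hA0.ne', neg_div]
          ring
        rw [heq]
        exact h1
    _ = Real.exp (((s-1:ℕ):ℝ) * (-(((m-1:ℕ):ℝ)) / ((n-1:ℕ):ℝ))) := by
        rw [Real.exp_nat_mul]
    _ ≤ Real.exp (-0.9 * t + 0.1) := by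
        apply Real.exp_le_exp.mpr
        have hsc : ((s-1:ℕ):ℝ) = (s:ℝ) - 1 := by
          have : 1 ≤ s := by omega
          push_cast [Nat.cast_sub this]
          ring
        have hmc : ((m-1:ℕ):ℝ) = (m:ℝ) - 1 := by
          have : 1 ≤ m := by omega
          push_cast [Nat.cast_sub this]
          ring
        have hnc : ((n-1:ℕ):ℝ) = (n:ℝ) - 1 := by
          have : 1 ≤ n := by omega
          push_cast [Nat.cast_sub this]
          ring
        rw [hsc, hmc, hnc]
        have hA0' : (0:ℝ) < (n:ℝ) - 1 := by rw [← hnc]; exact hA0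
        have h1 : (Real.sqrt n - 1) * (t * Real.sqrt n - 1) ≤ ((m:ℝ)-1) * ((s:ℝ)-1) :=
          mul_le_mul (by linarith) (by linarith) (by nlinarith) (by linarith)
        have h2 : (0:ℝ) ≤ (t+1) * ((Real.sqrt n - 1) * (Real.sqrt n - 9)) :=
          mul_nonneg (by linarith) (mul_nonneg (by linarith) (by linarith))
        have h3 : t * Real.sqrt n ^ 2 = t * (n:ℝ) := by rw [husq]
        have hkey : (0.9*t - 0.1) * ((n:ℝ)-1) ≤ ((s:ℝ)-1) * ((m:ℝ)-1) := by
          nlinarith [h1, h2, h3, husq]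
        have hrw : ((s:ℝ)-1) * (-((m:ℝ)-1) / ((n:ℝ)-1))
            = -(((s:ℝ)-1) * ((m:ℝ)-1)) / ((n:ℝ)-1) := by ring
        rw [hrw, div_le_iff₀ hA0']
        nlinarith [hkey]
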